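/- The star-K-Scheepers property is hereditary for clopen subsets: if X is star-K-Scheepers and A ⊆ X is clopen, then A (with the subspace topology) is star-K-Scheepers. -/
import Mathlib


open Set

/-- Star of a set `A` with respect to a family `P`: `St(A,P) = ⋃{B ∈ P : A ∩ B ≠ ∅}`. -/
def st {X : Type*} (A : Set X) (P : Set (Set X)) : Set X :=
  ⋃₀ {B | B ∈ P ∧ (A ∩ B).Nonempty}

/-- `U` is an open cover of the space. -/
def IsOpenCover {X : Type*} [TopologicalSpace X] (U : Set (Set X)) : Prop :=
  (∀ V ∈ U, IsOpen V) ∧ ⋃₀ U = Set.univ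

/-- An ω-cover: an open cover such that every finite subset lies in some member. -/
def IsOmegaCover {X : Type*} [TopologicalSpace X] (U : Set (Set X)) : Prop :=
  IsOpenCover U ∧ ∀ F : Set X, F.Finite → ∃ V ∈ U, F ⊆ V

/-- The star-K-Scheepers property. -/
def StarKScheepers (X : Type*) [TopologicalSpace X] : Prop :=
  ∀ U : ℕ → Set (Set X), (∀ n, IsOpenCover (U n)) →
    ∃ K : ℕ → Set X, (∀ n, IsCompact (K n)) ∧
      IsOmegaCover {S | ∃ n, S = st (K n) (U n)}

/-- The star-K-Scheepers property is hereditary for clopen subsets. -/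
theorem starKScheepers_clopen_subset {X : Type*} [TopologicalSpace X]
    (hX : StarKScheepers X) (A : Set X) (hA : IsClopen A) :
    StarKScheepers A := by
  intro U hU
  -- lift the covers to X
  set V : ℕ → Set (Set X) := fun n => ((fun W => Subtype.val '' W) '' (U n)) ∪ {Aᶜ} with hV
  have hVoc : ∀ n, IsOpenCover (V n) := by
    intro n
    constructor
    · rintro B (⟨W, hW, rfl⟩ | hB)
      · exact hA.isOpen.isOpenMap_subtype_val W ((hU n).1 W hW)
      · simp only [mem_singleton_iff] at hB
        subst hB
        exact hA.isClosed.isOpen_compl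
    · apply eq_univ_of_forall
      intro x
      by_cases hx : x ∈ A
      · have : (⟨x, hx⟩ : A) ∈ ⋃₀ U n := by rw [(hU n).2]; trivial
        obtain ⟨W, hW, hxW⟩ := this
        exact ⟨Subtype.val '' W, Or.inl ⟨W, hW, rfl⟩, ⟨⟨x, hx⟩, hxW, rfl⟩⟩
      · exact ⟨Aᶜ, Or.inr rfl, hx⟩
  obtain ⟨K, hKc, hKω⟩ := hX V hVoc
  refine ⟨fun n => Subtype.val ⁻¹' K n, ?_, ?_⟩
  · intro n
    rw [Subtype.isCompact_iff, Subtype.image_preimage_coe]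
    exact (hKc n).inter_left hA.isClosed
  · -- key: if ↑x ∈ st (K m) (V m) then x ∈ st (val ⁻¹' K m) (U m)
    have key : ∀ (m : ℕ) (x : A), (x : X) ∈ st (K m) (V m) →
        x ∈ st (Subtype.val ⁻¹' K m) (U m) := by
      rintro m x ⟨B, ⟨hB, y, hyK, hyB⟩, hxB⟩
      rcases hB with ⟨W, hW, rfl⟩ | hB
      · obtain ⟨y', hy'W, rfl⟩ := hyB
        obtain ⟨x', hx'W, hx'⟩ := hxB
        have : x' = x := Subtype.val_injective hx'
        subst this
        exact ⟨W, ⟨hW, ⟨y', hyK, hy'W⟩⟩, hx'W⟩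
      · simp only [mem_singleton_iff] at hB
        subst hB
        exact absurd x.2 hxB
    have hmem : ∀ F : Set A, F.Finite →
        ∃ S ∈ {S | ∃ n, S = st ((fun n => Subtype.val ⁻¹' K n) n) (U n)}, F ⊆ S := by
      intro F hF
      obtain ⟨S, ⟨m, rfl⟩, hsub⟩ := hKω.2 (Subtype.val '' F) (hF.image _)
      refine ⟨st (Subtype.val ⁻¹' K m) (U m), ⟨m, rfl⟩, fun x hx => ?_⟩
      exact key m x (hsub ⟨x, hx, rfl⟩)
    refine ⟨⟨?_, ?_⟩, hmem⟩
    · rintro S ⟨m, rfl⟩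
      apply isOpen_sUnion
      rintro B ⟨hB, -⟩
      exact (hU m).1 B hB
    · apply eq_univ_of_forall
      intro x
      obtain ⟨S, hS, hxS⟩ := hmem {x} (finite_singleton x)
      exact ⟨S, hS, hxS rfl⟩
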